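/- If the ideal of H-free graphs has the strong Erdős–Hajnal property, then H is a forest. (Equivalently: for every graph H containing a cycle and every ε > 0, there exists an H-free graph G with at least two vertices containing no two disjoint sets A, B, both complete or both anticomplete, of size at least ε|G|.) -/

import Mathlib

open Finset

section Counting
variable {α β : Type*} [Fintype α] [DecidableEq α] [Fintype β] [DecidableEq β]

lemma count_eq (b0 : β) (P : Finset α) :
    (univ.filter fun ω : α → β => ∀ p ∈ P, ω p = b0).card
      ≤ (Fintype.card β) ^ (Pᶜ.card) := by
  classical
  have h := Finset.card_le_card_of_injOn
    (f := fun (ω : α → β) => (fun x : {x // x ∈ Pᶜ} => ω x.1))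
    (s := univ.filter fun ω : α → β => ∀ p ∈ P, ω p = b0)
    (t := univ)
    (by intro a _; exact mem_univ _)
    (by
      intro ω1 h1 ω2 h2 hfg
      simp only [Finset.mem_coe, mem_filter, mem_univ, true_and] at h1 h2
      funext x
      by_cases hx : x ∈ P
      · rw [h1 x hx, h2 x hx]
      · exact congrFun hfg ⟨x, Finset.mem_compl.2 hx⟩)
  calc _ ≤ (univ : Finset ({x // x ∈ Pᶜ} → β)).card := h
    _ = _ := by rw [Finset.card_univ, Fintype.card_fun, Fintype.card_coe]

lemma count_ne (b0 : β) (P : Finset α) :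
    (univ.filter fun ω : α → β => ∀ p ∈ P, ω p ≠ b0).card
      ≤ (Fintype.card β - 1) ^ P.card * (Fintype.card β) ^ (Pᶜ.card) := by
  classical
  set s := univ.filter fun ω : α → β => ∀ p ∈ P, ω p ≠ b0 with hs
  have : s.card = Fintype.card {ω // ω ∈ s} := (Fintype.card_coe s).symm
  rw [this]
  have hinj : Function.Injective
      (fun (ω : {ω // ω ∈ s}) =>
        ((fun x : {x // x ∈ P} => (⟨ω.1 x.1, by
            have := (mem_filter.1 ω.2).2
            exact this x.1 x.2⟩ : {y : β // y ≠ b0})),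
         (fun x : {x // x ∈ Pᶜ} => ω.1 x.1))) := by
    intro ω1 ω2 hfg
    have h1' := congrArg Prod.fst hfg
    have h2' := congrArg Prod.snd hfg
    apply Subtype.ext
    funext x
    by_cases hx : x ∈ P
    · exact congrArg Subtype.val (congrFun h1' ⟨x, hx⟩)
    · exact congrFun h2' ⟨x, Finset.mem_compl.2 hx⟩
  have h := Fintype.card_le_of_injective _ hinj
  refine h.trans ?_
  rw [Fintype.card_prod, Fintype.card_fun, Fintype.card_fun, Fintype.card_coe,
    Fintype.card_coe]
  gcongr
  rw [Fintype.card_subtype_compl, Fintype.card_subtype_eq]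

omit [DecidableEq β] in
lemma compl_pow_mul (P : Finset α) :
    (Fintype.card β) ^ (Pᶜ.card) * (Fintype.card β) ^ P.card
      = (Fintype.card β) ^ (Fintype.card α) := by
  rw [← pow_add, Finset.card_compl]
  have := P.card_le_univ
  congr 1
  omega
  
end Counting


/-- successor index, cyclically. -/
def cycNext {k : ℕ} (i : Fin k) : Fin k :=
  ⟨((i : ℕ) + 1) % k, Nat.mod_lt _ (Nat.lt_of_le_of_lt (Nat.zero_le _) i.2)⟩

def IsCycTuple {V : Type*} (G : SimpleGraph V) (k : ℕ) (c : Fin k → V) : Prop :=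
  Function.Injective c ∧ ∀ i : Fin k, G.Adj (c i) (c (cycNext i))

section WalkTuple
variable {V : Type*} {G : SimpleGraph V}

lemma getVert_eq_support_getElem {u v : V} (p : G.Walk u v) (i : ℕ)
    (h : i < p.support.length) : p.getVert i = p.support[i] := by
  induction p generalizing i with
  | nil =>
    simp only [SimpleGraph.Walk.support_nil, List.length_singleton] at h
    interval_cases i
    simp [SimpleGraph.Walk.getVert_zero]
  | cons hadj q ih =>
    rcases i with _ | j
    · simp [SimpleGraph.Walk.getVert_zero]
    · rw [SimpleGraph.Walk.getVert_cons_succ]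
      simp only [SimpleGraph.Walk.support_cons, List.length_cons] at h ⊢
      rw [List.getElem_cons_succ]
      exact ih j (by omega)

lemma cycle_getVert_inj {v : V} {p : G.Walk v v} (hp : p.IsCycle)
    {a b : ℕ} (ha : a < p.length) (hb : b < p.length)
    (hab : p.getVert (a + 1) = p.getVert (b + 1)) : a = b := by
  have hlen : p.support.length = p.length + 1 := p.length_support
  have htail : p.support.tail.Nodup := hp.support_nodup
  have htl : p.support.tail.length = p.length := by
    rw [List.length_tail, hlen]; omega
  have key : ∀ (x : ℕ) (hx : x < p.length),
      p.support.tail[x]'(by omega) = p.getVert (x + 1) := by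
    intro x hx
    rw [List.getElem_tail]
    exact (getVert_eq_support_getElem p (x + 1) (by omega)).symm
  have h1 : p.support.tail[a]'(by omega) = p.support.tail[b]'(by omega) := by
    rw [key a ha, key b hb]; exact hab
  exact (List.Nodup.getElem_inj_iff htail).1 h1

lemma exists_cycTuple_of_cycle {v : V} {p : G.Walk v v} (hp : p.IsCycle) :
    ∃ c : Fin p.length → V, IsCycTuple G p.length c := by
  classical
  have hk3 : 3 ≤ p.length := hp.three_le_length
  refine ⟨fun i => p.getVert i.1, ?_, ?_⟩
  · intro i j hij
    simp only at hij
    rcases Nat.eq_zero_or_pos (i : ℕ) with hi0 | hi0 <;>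
      rcases Nat.eq_zero_or_pos (j : ℕ) with hj0 | hj0
    · exact Fin.ext (hi0.trans hj0.symm)
    · exfalso
      have : p.getVert ((p.length - 1) + 1) = p.getVert (((j : ℕ) - 1) + 1) := by
        have : (p.length - 1) + 1 = p.length := by omega
        rw [this, p.getVert_length]
        have : ((j : ℕ) - 1) + 1 = (j : ℕ) := by omega
        rw [this, ← hij, hi0, p.getVert_zero]
      have := cycle_getVert_inj hp (by omega) (by omega) this
      have hj := j.2
      omega
    · exfalso
      have : p.getVert ((p.length - 1) + 1) = p.getVert (((i : ℕ) - 1) + 1) := by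
        have h1 : (p.length - 1) + 1 = p.length := by omega
        rw [h1, p.getVert_length]
        have h2 : ((i : ℕ) - 1) + 1 = (i : ℕ) := by omega
        rw [h2, hij, hj0, p.getVert_zero]
      have := cycle_getVert_inj hp (by omega) (by omega) this
      have hi := i.2
      omega
    · have h1 : ((i : ℕ) - 1) + 1 = (i : ℕ) := by omega
      have h2 : ((j : ℕ) - 1) + 1 = (j : ℕ) := by omega
      have : p.getVert (((i : ℕ) - 1) + 1) = p.getVert (((j : ℕ) - 1) + 1) := by
        rw [h1, h2]; exact hij
      have := cycle_getVert_inj hp (by have := i.2; omega) (by have := j.2; omega) this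
      exact Fin.ext (by omega)
  · intro i
    simp only [cycNext]
    by_cases hlast : (i : ℕ) + 1 = p.length
    · have h0 : ((i : ℕ) + 1) % p.length = 0 := by rw [hlast, Nat.mod_self]
      simp only [h0]
      have := p.adj_getVert_succ (i := (i : ℕ)) (by omega)
      rw [hlast, p.getVert_length] at this
      simpa [p.getVert_zero] using this
    · have h1 : ((i : ℕ) + 1) % p.length = (i : ℕ) + 1 := by
        have := i.2; exact Nat.mod_eq_of_lt (by omega)
      simp only [h1]
      exact p.adj_getVert_succ (by have := i.2; omega)

end WalkTuple


def Gr (n S : ℕ) (ω : Sym2 (Fin n) → Fin (S + 1)) : SimpleGraph (Fin n) where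
  Adj i j := i ≠ j ∧ ω s(i, j) = 0
  symm := ⟨by rintro i j ⟨h1, h2⟩; exact ⟨h1.symm, by rwa [Sym2.eq_swap]⟩⟩
  loopless := ⟨by rintro i ⟨h1, _⟩; exact h1 rfl⟩

lemma gr_adj {n S : ℕ} (ω : Sym2 (Fin n) → Fin (S + 1)) (i j : Fin n) :
    (Gr n S ω).Adj i j ↔ i ≠ j ∧ ω s(i, j) = 0 := Iff.rfl

section SlotInj
variable {n k : ℕ}

lemma sigma_inj (hk : 3 ≤ k) (c : Fin k → Fin n) (hc : Function.Injective c) :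
    Function.Injective (fun i : Fin k => s(c i, c (cycNext i))) := by
  intro i j hij
  simp only [Sym2.eq_iff] at hij
  rcases hij with ⟨h1, h2⟩ | ⟨h1, h2⟩
  · exact hc h1
  · exfalso
    have hji : i = cycNext j := hc h1
    have hij' : cycNext i = j := hc h2
    have hiv : (i : ℕ) = ((j : ℕ) + 1) % k := by rw [hji]; rfl
    have hjv : (((i : ℕ) + 1) % k) = (j : ℕ) := by rw [← hij']; rfl
    have hik := i.2
    have hjk := j.2
    by_cases hi1 : (i : ℕ) + 1 = k
    · rw [hi1, Nat.mod_self] at hjv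
      rw [← hjv] at hiv
      rw [Nat.mod_eq_of_lt (by omega)] at hiv
      omega
    · rw [Nat.mod_eq_of_lt (by omega)] at hjv
      by_cases hj1 : (j : ℕ) + 1 = k
      · rw [hj1, Nat.mod_self] at hiv; omega
      · rw [Nat.mod_eq_of_lt (by omega)] at hiv; omega

lemma pair_inj {A B : Finset (Fin n)} (h : Disjoint A B) :
    Set.InjOn (fun ab : Fin n × Fin n => s(ab.1, ab.2)) (↑(A ×ˢ B) : Set (Fin n × Fin n)) := by
  rintro ⟨a, b⟩ hab ⟨a', b'⟩ hab' he
  simp only [Finset.mem_coe, Finset.mem_product] at hab hab'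
  simp only [Sym2.eq_iff] at he
  rcases he with ⟨h1, h2⟩ | ⟨h1, h2⟩
  · simp [h1, h2]
  · exfalso
    exact (Finset.disjoint_left.1 h hab.1) (h1 ▸ hab'.2)
end SlotInj

section CntBounds
variable {n S k r : ℕ}

lemma cnt_cyc_bound (hk : 3 ≤ k) (c : Fin k → Fin n) [DecidablePred fun ω : Sym2 (Fin n) → Fin (S+1) => IsCycTuple (Gr n S ω) k c] :
    (univ.filter fun ω : Sym2 (Fin n) → Fin (S + 1) => IsCycTuple (Gr n S ω) k c).card
        * (S + 1) ^ k
      ≤ (S + 1) ^ (Fintype.card (Sym2 (Fin n))) := by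
  classical
  by_cases hc : Function.Injective c
  · set P : Finset (Sym2 (Fin n)) := univ.image (fun i : Fin k => s(c i, c (cycNext i)))
      with hP
    have hPcard : P.card = k := by
      rw [hP, Finset.card_image_of_injective _ (sigma_inj hk c hc), card_univ,
        Fintype.card_fin]
    have hsub : (univ.filter fun ω : Sym2 (Fin n) → Fin (S + 1) =>
        IsCycTuple (Gr n S ω) k c)
        ⊆ univ.filter fun ω => ∀ p ∈ P, ω p = 0 := by
      intro ω hω
      simp only [mem_filter, mem_univ, true_and] at hω ⊢
      intro p hp
      rw [hP] at hp
      simp only [mem_image, mem_univ, true_and] at hp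
      obtain ⟨i, rfl⟩ := hp
      exact (hω.2 i).2
    calc (univ.filter fun ω : Sym2 (Fin n) → Fin (S + 1) =>
            IsCycTuple (Gr n S ω) k c).card * (S + 1) ^ k
        ≤ (univ.filter fun ω : Sym2 (Fin n) → Fin (S+1) => ∀ p ∈ P, ω p = 0).card
            * (S + 1) ^ k := by
          exact Nat.mul_le_mul_right _ (Finset.card_le_card hsub)
      _ ≤ (S + 1) ^ (Pᶜ.card) * (S + 1) ^ k := by
          have := count_eq (0 : Fin (S + 1)) P
          rw [Fintype.card_fin] at this
          exact Nat.mul_le_mul_right _ this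
      _ = (S + 1) ^ (Pᶜ.card) * (S + 1) ^ (P.card) := by rw [hPcard]
      _ = (S + 1) ^ (Fintype.card (Sym2 (Fin n))) := by
          have := compl_pow_mul (β := Fin (S + 1)) P
          rwa [Fintype.card_fin] at this
  · have : (univ.filter fun ω : Sym2 (Fin n) → Fin (S + 1) =>
        IsCycTuple (Gr n S ω) k c) = ∅ := by
      apply Finset.filter_eq_empty_iff.2
      intro ω _
      exact fun hcyc => hc hcyc.1
    rw [this]
    simp

lemma cnt_pair_bound_complete (A B : Finset (Fin n))
    [DecidablePred fun ω : Sym2 (Fin n) → Fin (S+1) =>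
      Disjoint A B ∧ A.card = r ∧ B.card = r ∧ ∀ a ∈ A, ∀ b ∈ B, (Gr n S ω).Adj a b] :
    (univ.filter fun ω : Sym2 (Fin n) → Fin (S + 1) =>
        Disjoint A B ∧ A.card = r ∧ B.card = r ∧
          ∀ a ∈ A, ∀ b ∈ B, (Gr n S ω).Adj a b).card * (S + 1) ^ (r * r)
      ≤ (S + 1) ^ (Fintype.card (Sym2 (Fin n))) := by
  classical
  by_cases hd : Disjoint A B ∧ A.card = r ∧ B.card = r
  · obtain ⟨hdisj, hA, hB⟩ := hd
    set P : Finset (Sym2 (Fin n)) := (A ×ˢ B).image (fun ab => s(ab.1, ab.2)) with hP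
    have hPcard : P.card = r * r := by
      rw [hP, Finset.card_image_of_injOn (pair_inj hdisj), Finset.card_product, hA, hB]
    have hsub : (univ.filter fun ω : Sym2 (Fin n) → Fin (S + 1) =>
        Disjoint A B ∧ A.card = r ∧ B.card = r ∧
          ∀ a ∈ A, ∀ b ∈ B, (Gr n S ω).Adj a b)
        ⊆ univ.filter fun ω => ∀ p ∈ P, ω p = 0 := by
      intro ω hω
      simp only [mem_filter, mem_univ, true_and] at hω ⊢
      intro p hp
      rw [hP] at hp
      simp only [mem_image, mem_product] at hp
      obtain ⟨⟨a, b⟩, ⟨ha, hb⟩, rfl⟩ := hp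
      exact (hω.2.2.2 a ha b hb).2
    calc _ ≤ (univ.filter fun ω : Sym2 (Fin n) → Fin (S+1) =>
            ∀ p ∈ P, ω p = 0).card * (S + 1) ^ (r * r) :=
          Nat.mul_le_mul_right _ (Finset.card_le_card hsub)
      _ ≤ (S + 1) ^ (Pᶜ.card) * (S + 1) ^ (r * r) := by
          have := count_eq (0 : Fin (S + 1)) P
          rw [Fintype.card_fin] at this
          exact Nat.mul_le_mul_right _ this
      _ = (S + 1) ^ (Pᶜ.card) * (S + 1) ^ (P.card) := by rw [hPcard]
      _ = _ := by
          have := compl_pow_mul (β := Fin (S + 1)) P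
          rwa [Fintype.card_fin] at this
  · have : (univ.filter fun ω : Sym2 (Fin n) → Fin (S + 1) =>
        Disjoint A B ∧ A.card = r ∧ B.card = r ∧
          ∀ a ∈ A, ∀ b ∈ B, (Gr n S ω).Adj a b) = ∅ := by
      apply Finset.filter_eq_empty_iff.2
      intro ω _
      exact fun hcyc => hd ⟨hcyc.1, hcyc.2.1, hcyc.2.2.1⟩
    rw [this]
    simp

lemma cnt_pair_bound_anticomplete (A B : Finset (Fin n))
    [DecidablePred fun ω : Sym2 (Fin n) → Fin (S+1) =>
      Disjoint A B ∧ A.card = r ∧ B.card = r ∧ ∀ a ∈ A, ∀ b ∈ B, ¬ (Gr n S ω).Adj a b] :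
    (univ.filter fun ω : Sym2 (Fin n) → Fin (S + 1) =>
        Disjoint A B ∧ A.card = r ∧ B.card = r ∧
          ∀ a ∈ A, ∀ b ∈ B, ¬ (Gr n S ω).Adj a b).card * (S + 1) ^ (r * r)
      ≤ S ^ (r * r) * (S + 1) ^ (Fintype.card (Sym2 (Fin n))) := by
  classical
  by_cases hd : Disjoint A B ∧ A.card = r ∧ B.card = r
  · obtain ⟨hdisj, hA, hB⟩ := hd
    set P : Finset (Sym2 (Fin n)) := (A ×ˢ B).image (fun ab => s(ab.1, ab.2)) with hP
    have hPcard : P.card = r * r := by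
      rw [hP, Finset.card_image_of_injOn (pair_inj hdisj), Finset.card_product, hA, hB]
    have hsub : (univ.filter fun ω : Sym2 (Fin n) → Fin (S + 1) =>
        Disjoint A B ∧ A.card = r ∧ B.card = r ∧
          ∀ a ∈ A, ∀ b ∈ B, ¬ (Gr n S ω).Adj a b)
        ⊆ univ.filter fun ω => ∀ p ∈ P, ω p ≠ 0 := by
      intro ω hω
      simp only [mem_filter, mem_univ, true_and] at hω ⊢
      intro p hp
      rw [hP] at hp
      simp only [mem_image, mem_product] at hp
      obtain ⟨⟨a, b⟩, ⟨ha, hb⟩, rfl⟩ := hp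
      intro h0
      have hne : a ≠ b := by
        intro h
        exact (Finset.disjoint_left.1 hω.1 ha) (h ▸ hb)
      exact hω.2.2.2 a ha b hb ⟨hne, h0⟩
    calc _ ≤ (univ.filter fun ω : Sym2 (Fin n) → Fin (S+1) =>
            ∀ p ∈ P, ω p ≠ 0).card * (S + 1) ^ (r * r) :=
          Nat.mul_le_mul_right _ (Finset.card_le_card hsub)
      _ ≤ (S ^ (P.card) * (S + 1) ^ (Pᶜ.card)) * (S + 1) ^ (r * r) := by
          have := count_ne (0 : Fin (S + 1)) P
          rw [Fintype.card_fin] at this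
          simp only [Nat.add_sub_cancel] at this
          exact Nat.mul_le_mul_right _ this
      _ = S ^ (r * r) * ((S + 1) ^ (Pᶜ.card) * (S + 1) ^ (P.card)) := by
          rw [hPcard]; ring
      _ = _ := by
          have := compl_pow_mul (β := Fin (S + 1)) P
          rw [Fintype.card_fin] at this
          rw [this]
  · have : (univ.filter fun ω : Sym2 (Fin n) → Fin (S + 1) =>
        Disjoint A B ∧ A.card = r ∧ B.card = r ∧
          ∀ a ∈ A, ∀ b ∈ B, ¬ (Gr n S ω).Adj a b) = ∅ := by
      apply Finset.filter_eq_empty_iff.2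
      intro ω _
      exact fun hcyc => hd ⟨hcyc.1, hcyc.2.1, hcyc.2.2.1⟩
    rw [this]
    simp
end CntBounds


lemma bern (S : ℕ) (hS : 1 ≤ S) : 2 * S ^ S ≤ (S + 1) ^ S := by
  have hS' : (0 : ℝ) < (S : ℝ) := by exact_mod_cast hS
  have hpos : (0:ℝ) ≤ 1 / (S:ℝ) := by positivity
  have h := one_add_mul_le_pow (a := 1 / (S : ℝ)) (by linarith : (-2:ℝ) ≤ 1 / S) S
  have h2 : (1 : ℝ) + (S : ℝ) * (1 / S) = 2 := by
    rw [mul_one_div, div_self (ne_of_gt hS')]; norm_num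
  rw [h2] at h
  have key : (2 : ℝ) * (S : ℝ) ^ S ≤ ((S : ℝ) + 1) ^ S := by
    have hfac : ((S : ℝ) + 1) ^ S = (S : ℝ) ^ S * (1 + 1 / S) ^ S := by
      rw [← mul_pow]
      congr 1
      field_simp
    rw [hfac]
    nlinarith [pow_pos hS' S]
  exact_mod_cast key

lemma arith_main (S m r n : ℕ) (hS : 3 ≤ S) (hm : 2 ≤ m) (hr : r = 16 * m * S)
    (hn : n = 2 * m * r) :
    3 * (2 ^ n * 2 ^ n) * S ^ (r * r) < (S + 1) ^ (r * r) := by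
  have hr1 : 1 ≤ r := by subst hr; nlinarith
  have hmr : 1 ≤ m * r := by nlinarith
  have h1 : 3 * (2 ^ n * 2 ^ n) < 2 ^ (16 * m * r) := by
    have : (3 : ℕ) * (2 ^ n * 2 ^ n) < 2 ^ (n + n + 2) := by
      rw [pow_add, pow_add]
      have hp : 0 < 2 ^ n := Nat.pow_pos (by norm_num)
      nlinarith
    refine this.trans_le (Nat.pow_le_pow_right (by norm_num) ?_)
    subst hn
    nlinarith
  have hrr : r * r = S * (16 * m * r) := by subst hr; ring
  have h2 : 2 ^ (16 * m * r) * S ^ (r * r) ≤ (S + 1) ^ (r * r) := by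
    calc 2 ^ (16 * m * r) * S ^ (r * r)
        = (2 * S ^ S) ^ (16 * m * r) := by
          rw [mul_pow, ← pow_mul, hrr]
      _ ≤ ((S + 1) ^ S) ^ (16 * m * r) :=
          Nat.pow_le_pow_left (bern S (by omega)) _
      _ = (S + 1) ^ (r * r) := by rw [← pow_mul, hrr]
  calc 3 * (2 ^ n * 2 ^ n) * S ^ (r * r)
      < 2 ^ (16 * m * r) * S ^ (r * r) :=
        Nat.mul_lt_mul_of_lt_of_le h1 (le_refl _) (Nat.pow_pos (by omega))
    _ ≤ (S + 1) ^ (r * r) := h2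

lemma arith_cyc (S m r n k : ℕ) (hS : S = 3 * (32 * m ^ 2) ^ k) (hm : 2 ≤ m)
    (hr : r = 16 * m * S) (hn : n = 2 * m * r) :
    3 * n ^ k ≤ S * (S + 1) ^ k := by
  have h1 : n ≤ 32 * m ^ 2 * (S + 1) := by
    subst hn hr
    nlinarith
  calc 3 * n ^ k ≤ 3 * (32 * m ^ 2 * (S + 1)) ^ k := by
        exact Nat.mul_le_mul_left _ (Nat.pow_le_pow_left h1 k)
    _ = 3 * (32 * m ^ 2) ^ k * (S + 1) ^ k := by rw [mul_pow, mul_assoc]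
    _ = S * (S + 1) ^ k := by rw [hS]


lemma main_construction (k m : ℕ) (hk : 3 ≤ k) (hm : 2 ≤ m) :
    ∃ (N : ℕ) (G : SimpleGraph (Fin N)) (r : ℕ),
      2 ≤ N ∧ 0 < r ∧ m * r ≤ N ∧
      (∀ c : Fin k → Fin N, ¬ IsCycTuple G k c) ∧
      (∀ A B : Finset (Fin N), Disjoint A B → r ≤ A.card → r ≤ B.card →
        ¬ ((∀ a ∈ A, ∀ b ∈ B, G.Adj a b) ∨ (∀ a ∈ A, ∀ b ∈ B, ¬ G.Adj a b))) := by
  classical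
  set S : ℕ := 3 * (32 * m ^ 2) ^ k with hSdef
  have hS3 : 3 ≤ S := by
    have : 1 ≤ (32 * m ^ 2) ^ k := Nat.one_le_pow _ _ (by positivity)
    omega
  set r : ℕ := 16 * m * S with hrdef
  set n : ℕ := 2 * m * r with hndef
  have hr1 : 0 < r := by rw [hrdef]; positivity
  have hmr2 : 2 ≤ m * r := by nlinarith
  have hmr' : m * r = 16 * (m * m) * S := by rw [hrdef]; ring
  have hSmr : S ≤ m * r := by
    rw [hmr']
    exact Nat.le_mul_of_pos_left S (by positivity)
  set M : ℕ := Fintype.card (Sym2 (Fin n)) with hMdef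
  have hΩcard : Fintype.card (Sym2 (Fin n) → Fin (S + 1)) = (S + 1) ^ M := by
    rw [Fintype.card_fun, Fintype.card_fin]
  set T : (Sym2 (Fin n) → Fin (S + 1)) → ℕ := fun ω =>
    (univ.filter fun c : Fin k → Fin n => IsCycTuple (Gr n S ω) k c).card with hTdef
  set bad1 : Finset (Sym2 (Fin n) → Fin (S + 1)) := univ.filter fun ω => S ≤ T ω with hbad1
  set bad2 : Finset (Sym2 (Fin n) → Fin (S + 1)) := univ.filter fun ω => ∃ A B : Finset (Fin n),
    Disjoint A B ∧ A.card = r ∧ B.card = r ∧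
      ∀ a ∈ A, ∀ b ∈ B, (Gr n S ω).Adj a b with hbad2
  set bad3 : Finset (Sym2 (Fin n) → Fin (S + 1)) := univ.filter fun ω => ∃ A B : Finset (Fin n),
    Disjoint A B ∧ A.card = r ∧ B.card = r ∧
      ∀ a ∈ A, ∀ b ∈ B, ¬ (Gr n S ω).Adj a b with hbad3
  -- Bound on bad1
  have hswap : ∑ ω : Sym2 (Fin n) → Fin (S + 1), T ω = ∑ c : Fin k → Fin n,
      (univ.filter fun ω : Sym2 (Fin n) → Fin (S + 1) => IsCycTuple (Gr n S ω) k c).card := by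
    simp only [hTdef, Finset.card_filter]
    rw [Finset.sum_comm]
  have hstep : (∑ ω : Sym2 (Fin n) → Fin (S + 1), T ω) * (S + 1) ^ k ≤ n ^ k * (S + 1) ^ M := by
    rw [hswap, Finset.sum_mul]
    calc ∑ c : Fin k → Fin n,
          (univ.filter fun ω : Sym2 (Fin n) → Fin (S + 1) => IsCycTuple (Gr n S ω) k c).card * (S + 1) ^ k
        ≤ ∑ _c : Fin k → Fin n, (S + 1) ^ M :=
          Finset.sum_le_sum fun c _ => cnt_cyc_bound hk c
      _ = n ^ k * (S + 1) ^ M := by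
          rw [Finset.sum_const, card_univ, Fintype.card_fun, Fintype.card_fin,
            Fintype.card_fin, smul_eq_mul]
  have hmarkov : bad1.card * S ≤ ∑ ω : Sym2 (Fin n) → Fin (S + 1), T ω := by
    calc bad1.card * S = bad1.card • S := by rw [smul_eq_mul]
      _ ≤ ∑ ω ∈ bad1, T ω := Finset.card_nsmul_le_sum _ _ _
          (fun ω hω => (mem_filter.1 hω).2)
      _ ≤ ∑ ω : Sym2 (Fin n) → Fin (S + 1), T ω := Finset.sum_le_sum_of_subset (subset_univ _)
  have h1 : 3 * bad1.card ≤ (S + 1) ^ M := by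
    have hkey : (3 * bad1.card) * (S * (S + 1) ^ k) ≤ ((S + 1) ^ M) * (S * (S + 1) ^ k) := by
      calc (3 * bad1.card) * (S * (S + 1) ^ k)
          = 3 * ((bad1.card * S) * (S + 1) ^ k) := by ring
        _ ≤ 3 * ((∑ ω : Sym2 (Fin n) → Fin (S + 1), T ω) * (S + 1) ^ k) :=
            Nat.mul_le_mul_left _ (Nat.mul_le_mul_right _ hmarkov)
        _ ≤ 3 * (n ^ k * (S + 1) ^ M) := Nat.mul_le_mul_left _ hstep
        _ = (3 * n ^ k) * (S + 1) ^ M := by ring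
        _ ≤ (S * (S + 1) ^ k) * (S + 1) ^ M :=
            Nat.mul_le_mul_right _ (arith_cyc S m r n k hSdef hm hrdef hndef)
        _ = ((S + 1) ^ M) * (S * (S + 1) ^ k) := by ring
    exact Nat.le_of_mul_le_mul_right hkey (by positivity)
  -- Bound on bad2
  have hpairs : Fintype.card (Finset (Fin n) × Finset (Fin n)) = 2 ^ n * 2 ^ n := by
    rw [Fintype.card_prod, Fintype.card_finset, Fintype.card_fin]
  have hb2 : bad2.card ≤ ∑ AB : Finset (Fin n) × Finset (Fin n),
      (univ.filter fun ω : Sym2 (Fin n) → Fin (S + 1) => Disjoint AB.1 AB.2 ∧ AB.1.card = r ∧ AB.2.card = r ∧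
        ∀ a ∈ AB.1, ∀ b ∈ AB.2, (Gr n S ω).Adj a b).card := by
    have hsub : bad2 ⊆ univ.biUnion (fun AB : Finset (Fin n) × Finset (Fin n) =>
        univ.filter fun ω : Sym2 (Fin n) → Fin (S + 1) => Disjoint AB.1 AB.2 ∧ AB.1.card = r ∧ AB.2.card = r ∧
          ∀ a ∈ AB.1, ∀ b ∈ AB.2, (Gr n S ω).Adj a b) := by
      intro ω hω
      obtain ⟨A, B, h⟩ := (mem_filter.1 hω).2
      exact Finset.mem_biUnion.2 ⟨(A, B), mem_univ _, mem_filter.2 ⟨mem_univ _, h⟩⟩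
    exact (Finset.card_le_card hsub).trans (Finset.card_biUnion_le)
  have h2 : 3 * bad2.card < (S + 1) ^ M := by
    have hq : 3 * (2 ^ n * 2 ^ n) < (S + 1) ^ (r * r) := by
      have h' := arith_main S m r n hS3 hm hrdef hndef
      have : 3 * (2 ^ n * 2 ^ n) ≤ 3 * (2 ^ n * 2 ^ n) * S ^ (r * r) :=
        Nat.le_mul_of_pos_right _ (by positivity)
      omega
    have hkey : (3 * bad2.card) * ((S + 1) ^ (r * r)) < ((S + 1) ^ M) * ((S + 1) ^ (r * r)) := by
      calc (3 * bad2.card) * ((S + 1) ^ (r * r))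
          = 3 * (bad2.card * (S + 1) ^ (r * r)) := by ring
        _ ≤ 3 * ((∑ AB : Finset (Fin n) × Finset (Fin n),
              (univ.filter fun ω : Sym2 (Fin n) → Fin (S + 1) => Disjoint AB.1 AB.2 ∧ AB.1.card = r ∧ AB.2.card = r ∧
                ∀ a ∈ AB.1, ∀ b ∈ AB.2, (Gr n S ω).Adj a b).card) * (S + 1) ^ (r * r)) :=
            Nat.mul_le_mul_left _ (Nat.mul_le_mul_right _ hb2)
        _ = 3 * (∑ AB : Finset (Fin n) × Finset (Fin n),
              (univ.filter fun ω : Sym2 (Fin n) → Fin (S + 1) => Disjoint AB.1 AB.2 ∧ AB.1.card = r ∧ AB.2.card = r ∧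
                ∀ a ∈ AB.1, ∀ b ∈ AB.2, (Gr n S ω).Adj a b).card * (S + 1) ^ (r * r)) := by
            rw [Finset.sum_mul]
        _ ≤ 3 * (∑ _AB : Finset (Fin n) × Finset (Fin n), (S + 1) ^ M) :=
            Nat.mul_le_mul_left _ (Finset.sum_le_sum fun AB _ =>
              cnt_pair_bound_complete AB.1 AB.2)
        _ = 3 * (2 ^ n * 2 ^ n) * (S + 1) ^ M := by
            rw [Finset.sum_const, card_univ, hpairs, smul_eq_mul]; ring
        _ < (S + 1) ^ (r * r) * (S + 1) ^ M :=
            Nat.mul_lt_mul_of_lt_of_le hq (le_refl _) (by positivity)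
        _ = ((S + 1) ^ M) * ((S + 1) ^ (r * r)) := by ring
    exact Nat.lt_of_mul_lt_mul_right hkey
  -- Bound on bad3
  have hb3 : bad3.card ≤ ∑ AB : Finset (Fin n) × Finset (Fin n),
      (univ.filter fun ω : Sym2 (Fin n) → Fin (S + 1) => Disjoint AB.1 AB.2 ∧ AB.1.card = r ∧ AB.2.card = r ∧
        ∀ a ∈ AB.1, ∀ b ∈ AB.2, ¬ (Gr n S ω).Adj a b).card := by
    have hsub : bad3 ⊆ univ.biUnion (fun AB : Finset (Fin n) × Finset (Fin n) =>
        univ.filter fun ω : Sym2 (Fin n) → Fin (S + 1) => Disjoint AB.1 AB.2 ∧ AB.1.card = r ∧ AB.2.card = r ∧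
          ∀ a ∈ AB.1, ∀ b ∈ AB.2, ¬ (Gr n S ω).Adj a b) := by
      intro ω hω
      obtain ⟨A, B, h⟩ := (mem_filter.1 hω).2
      exact Finset.mem_biUnion.2 ⟨(A, B), mem_univ _, mem_filter.2 ⟨mem_univ _, h⟩⟩
    exact (Finset.card_le_card hsub).trans (Finset.card_biUnion_le)
  have h3 : 3 * bad3.card < (S + 1) ^ M := by
    have hq := arith_main S m r n hS3 hm hrdef hndef
    have hkey : (3 * bad3.card) * ((S + 1) ^ (r * r)) < ((S + 1) ^ M) * ((S + 1) ^ (r * r)) := by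
      calc (3 * bad3.card) * ((S + 1) ^ (r * r))
          = 3 * (bad3.card * (S + 1) ^ (r * r)) := by ring
        _ ≤ 3 * ((∑ AB : Finset (Fin n) × Finset (Fin n),
              (univ.filter fun ω : Sym2 (Fin n) → Fin (S + 1) => Disjoint AB.1 AB.2 ∧ AB.1.card = r ∧ AB.2.card = r ∧
                ∀ a ∈ AB.1, ∀ b ∈ AB.2, ¬ (Gr n S ω).Adj a b).card) * (S + 1) ^ (r * r)) :=
            Nat.mul_le_mul_left _ (Nat.mul_le_mul_right _ hb3)
        _ = 3 * (∑ AB : Finset (Fin n) × Finset (Fin n),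
              (univ.filter fun ω : Sym2 (Fin n) → Fin (S + 1) => Disjoint AB.1 AB.2 ∧ AB.1.card = r ∧ AB.2.card = r ∧
                ∀ a ∈ AB.1, ∀ b ∈ AB.2, ¬ (Gr n S ω).Adj a b).card * (S + 1) ^ (r * r)) := by
            rw [Finset.sum_mul]
        _ ≤ 3 * (∑ _AB : Finset (Fin n) × Finset (Fin n), S ^ (r * r) * (S + 1) ^ M) :=
            Nat.mul_le_mul_left _ (Finset.sum_le_sum fun AB _ =>
              cnt_pair_bound_anticomplete AB.1 AB.2)
        _ = 3 * (2 ^ n * 2 ^ n) * S ^ (r * r) * (S + 1) ^ M := by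
            rw [Finset.sum_const, card_univ, hpairs, smul_eq_mul]; ring
        _ < (S + 1) ^ (r * r) * (S + 1) ^ M :=
            Nat.mul_lt_mul_of_lt_of_le hq (le_refl _) (by positivity)
        _ = ((S + 1) ^ M) * ((S + 1) ^ (r * r)) := by ring
    exact Nat.lt_of_mul_lt_mul_right hkey
  -- a good ω exists
  have hunion : (bad1 ∪ bad2 ∪ bad3).card < Fintype.card (Sym2 (Fin n) → Fin (S + 1)) := by
    rw [hΩcard]
    have := (Finset.card_union_le (bad1 ∪ bad2) bad3).trans
      (Nat.add_le_add_right (Finset.card_union_le bad1 bad2) _)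
    omega
  have hnonempty : (univ \ (bad1 ∪ bad2 ∪ bad3)).Nonempty := by
    rw [← Finset.card_pos, Finset.card_sdiff_of_subset (subset_univ _), card_univ]
    omega
  obtain ⟨ω, hω⟩ := hnonempty
  rw [Finset.mem_sdiff] at hω
  have hω1 : ¬ S ≤ T ω := by
    intro h
    exact hω.2 (Finset.mem_union_left _ (Finset.mem_union_left _
      (mem_filter.2 ⟨mem_univ _, h⟩)))
  have hω2 : ¬ ∃ A B : Finset (Fin n), Disjoint A B ∧ A.card = r ∧ B.card = r ∧
      ∀ a ∈ A, ∀ b ∈ B, (Gr n S ω).Adj a b := by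
    intro h
    exact hω.2 (Finset.mem_union_left _ (Finset.mem_union_right _
      (mem_filter.2 ⟨mem_univ _, h⟩)))
  have hω3 : ¬ ∃ A B : Finset (Fin n), Disjoint A B ∧ A.card = r ∧ B.card = r ∧
      ∀ a ∈ A, ∀ b ∈ B, ¬ (Gr n S ω).Adj a b := by
    intro h
    exact hω.2 (Finset.mem_union_right _ (mem_filter.2 ⟨mem_univ _, h⟩))
  -- delete one vertex from each k-cycle
  set Vbad : Finset (Fin n) :=
    (univ.filter fun c : Fin k → Fin n => IsCycTuple (Gr n S ω) k c).image
      (fun c => c ⟨0, by omega⟩) with hVbad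
  have hTlt : T ω < S := by omega
  have hVcard : Vbad.card < S := lt_of_le_of_lt Finset.card_image_le hTlt
  set rest : Finset (Fin n) := Vbadᶜ with hrest
  set N : ℕ := rest.card with hN
  have hNval : N = n - Vbad.card := by
    rw [hN, hrest, Finset.card_compl, Fintype.card_fin]
  have hmrN : m * r ≤ N := by
    have hn2 : n = 2 * (m * r) := by rw [hndef, Nat.mul_assoc]
    omega
  set ι : Fin N ≃o {x // x ∈ rest} := rest.orderIsoOfFin hN.symm with hι
  set ιv : Fin N → Fin n := fun i => (ι i : Fin n) with hιv
  have hιinj : Function.Injective ιv := by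
    intro a b hab
    exact ι.injective (Subtype.ext hab)
  refine ⟨N, (Gr n S ω).comap ιv, r, by omega, by omega, hmrN, ?_, ?_⟩
  · -- no k-cycle tuples
    intro c hc
    have hc' : IsCycTuple (Gr n S ω) k (ιv ∘ c) :=
      ⟨hιinj.comp hc.1, fun i => hc.2 i⟩
    have hmem : (ιv ∘ c) ⟨0, by omega⟩ ∈ Vbad := by
      rw [hVbad]
      exact Finset.mem_image_of_mem _ (mem_filter.2 ⟨mem_univ _, hc'⟩)
    have : ιv (c ⟨0, by omega⟩) ∈ rest := (ι (c ⟨0, by omega⟩)).2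
    rw [hrest, Finset.mem_compl] at this
    exact this hmem
  · -- no large complete/anticomplete pairs
    intro A B hdisj hA hB hcon
    have hA' : r ≤ (A.image ιv).card := by
      rwa [Finset.card_image_of_injective _ hιinj]
    have hB' : r ≤ (B.image ιv).card := by
      rwa [Finset.card_image_of_injective _ hιinj]
    obtain ⟨A₀, hA₀sub, hA₀card⟩ := Finset.exists_subset_card_eq hA'
    obtain ⟨B₀, hB₀sub, hB₀card⟩ := Finset.exists_subset_card_eq hB'
    have hdisj' : Disjoint A₀ B₀ :=
      ((Finset.disjoint_image hιinj).2 hdisj).mono hA₀sub hB₀sub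
    rcases hcon with hcomp | hanti
    · apply hω2
      refine ⟨A₀, B₀, hdisj', hA₀card, hB₀card, ?_⟩
      intro a ha b hb
      obtain ⟨a₁, ha₁, rfl⟩ := Finset.mem_image.1 (hA₀sub ha)
      obtain ⟨b₁, hb₁, rfl⟩ := Finset.mem_image.1 (hB₀sub hb)
      exact hcomp a₁ ha₁ b₁ hb₁
    · apply hω3
      refine ⟨A₀, B₀, hdisj', hA₀card, hB₀card, ?_⟩
      intro a ha b hb
      obtain ⟨a₁, ha₁, rfl⟩ := Finset.mem_image.1 (hA₀sub ha)
      obtain ⟨b₁, hb₁, rfl⟩ := Finset.mem_image.1 (hB₀sub hb)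
      exact hanti a₁ ha₁ b₁ hb₁


/-- A finite graph, presented as a number of vertices together with a graph on `Fin n`. -/
abbrev GraphOn := Σ n : ℕ, SimpleGraph (Fin n)

/-- `H` is (isomorphic to) an induced subgraph of `G`. -/
def Embeds (H G : GraphOn) : Prop :=
  ∃ f : Fin H.1 → Fin G.1, Function.Injective f ∧
    ∀ a b, H.2.Adj a b ↔ G.2.Adj (f a) (f b)

/-- A class of graphs has the strong Erdős–Hajnal property: for some `ε > 0`, every member
with at least two vertices has two disjoint linear-sized sets that are complete or
anticomplete to each other. -/
def StrongEH (I : Set GraphOn) : Prop :=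
  ∃ ε : ℝ, 0 < ε ∧ ∀ G ∈ I, 2 ≤ G.1 →
    ∃ A B : Finset (Fin G.1), Disjoint A B ∧
      ε * (G.1 : ℝ) ≤ A.card ∧ ε * (G.1 : ℝ) ≤ B.card ∧
      ((∀ a ∈ A, ∀ b ∈ B, G.2.Adj a b) ∨ (∀ a ∈ A, ∀ b ∈ B, ¬ G.2.Adj a b))

theorem stmt_14 (H : GraphOn)
    (hEH : StrongEH {G : GraphOn | ¬ Embeds H G}) : H.2.IsAcyclic := by
  by_contra hnac
  rw [SimpleGraph.IsAcyclic] at hnac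
  push_neg at hnac
  obtain ⟨v, p, hp⟩ := hnac
  set k : ℕ := p.length with hkdef
  have hk3 : 3 ≤ k := hp.three_le_length
  obtain ⟨cH, hcH⟩ := exists_cycTuple_of_cycle hp
  obtain ⟨ε, hε, hprop⟩ := hEH
  set m : ℕ := max 2 ⌈ε⁻¹⌉₊ with hmdef
  have hm2 : 2 ≤ m := le_max_left _ _
  have hm0 : (0 : ℝ) < m := by positivity
  have hεm : 1 ≤ ε * m := by
    have h1 : ε⁻¹ ≤ (m : ℝ) := by
      refine (Nat.le_ceil _).trans ?_
      exact_mod_cast Nat.cast_le.2 (le_max_right 2 ⌈ε⁻¹⌉₊)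
    calc (1 : ℝ) = ε * ε⁻¹ := by rw [mul_inv_cancel₀ (ne_of_gt hε)]
      _ ≤ ε * m := mul_le_mul_of_nonneg_left h1 hε.le
  obtain ⟨N, G, r, hN2, hr0, hmrN, hnocyc, hnopair⟩ := main_construction k m hk3 hm2
  have hfree : ¬ Embeds H ⟨N, G⟩ := by
    rintro ⟨f, hfinj, hfadj⟩
    exact hnocyc (f ∘ cH) ⟨hfinj.comp hcH.1, fun i => (hfadj _ _).1 (hcH.2 i)⟩
  obtain ⟨A, B, hdisj, hA, hB, hcon⟩ := hprop ⟨N, G⟩ hfree hN2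
  have hrcard : ∀ C : Finset (Fin N), ε * (N : ℝ) ≤ C.card → r ≤ C.card := by
    intro C hC
    have h1 : (m : ℝ) * r ≤ N := by exact_mod_cast hmrN
    have h2 : (r : ℝ) ≤ ε * N := by
      calc (r : ℝ) = 1 * r := (one_mul _).symm
        _ ≤ (ε * m) * r := mul_le_mul_of_nonneg_right hεm (by positivity)
        _ = ε * ((m : ℝ) * r) := by ring
        _ ≤ ε * N := mul_le_mul_of_nonneg_left h1 hε.le
    exact_mod_cast h2.trans hC
  exact hnopair A B hdisj (hrcard A hA) (hrcard B hB) hcon
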